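/- Let L = ℓ/m > 2 be rational in lowest terms, and let S, S' be dense countable integer-distance-free subsets of ℝ/Lℤ. If G is a g.e.c. unit-threshold graph on S and G' is a g.e.c. unit-threshold graph on S', then G and G' are isomorphic as graphs. -/

import Mathlib

set_option maxHeartbeats 1000000

/-- Geometric existential closure for a graph on a subset `S` of the circle. -/
def IsGEC {L : ℝ} {S : Set (AddCircle L)} (G : SimpleGraph S) : Prop :=
  ∀ (s : S) (A B : Finset S), Disjoint A B →
    (∀ a ∈ A, dist (a : AddCircle L) (s : AddCircle L) < 1) →
    (∀ b ∈ B, dist (b : AddCircle L) (s : AddCircle L) < 1) →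
    ∀ ε : ℝ, 0 < ε →
      ∃ v : S, v ∉ A ∧ v ∉ B ∧ (∀ a ∈ A, G.Adj v a) ∧ (∀ b ∈ B, ¬ G.Adj v b) ∧
        dist (v : AddCircle L) (s : AddCircle L) < ε

/-- Adjacent vertices are at circle distance less than 1. -/
def HasUnitThreshold {L : ℝ} {S : Set (AddCircle L)} (G : SimpleGraph S) : Prop :=
  ∀ u v : S, G.Adj u v → dist (u : AddCircle L) (v : AddCircle L) < 1

/-- `S` is integer-distance-free for `L = ℓ/m`: no two distinct points of `S` are at a distance
which is a multiple of `1/m`. -/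
def IntegerDistanceFree {L : ℝ} (m : ℕ) (S : Set (AddCircle L)) : Prop :=
  ∀ u ∈ S, ∀ v ∈ S, u ≠ v → ∀ j : ℕ, dist u v ≠ (j : ℝ) / (m : ℝ)


open Set

noncomputable section

namespace Stmt13

variable {L : ℝ} [hLfact : Fact (0 < L)]

/-- canonical representative in `[0, L)` -/
def rp (L : ℝ) [Fact (0 < L)] (z : AddCircle L) : ℝ := (AddCircle.equivIco L 0 z : ℝ)

lemma rp_mem (z : AddCircle L) : rp L z ∈ Ico (0:ℝ) L := by
  have h := (AddCircle.equivIco L 0 z).2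
  simpa [rp] using h

lemma rp_nonneg (z : AddCircle L) : 0 ≤ rp L z := (rp_mem z).1
lemma rp_lt (z : AddCircle L) : rp L z < L := (rp_mem z).2

lemma coe_rp (z : AddCircle L) : ((rp L z : ℝ) : AddCircle L) = z :=
  (AddCircle.equivIco L 0).symm_apply_apply z

lemma rp_coe {r : ℝ} (hr : r ∈ Ico (0:ℝ) L) : rp L (r : AddCircle L) = r := by
  have h1 : rp L (r : AddCircle L) ∈ Ico (0:ℝ) (0 + L) := by simpa using rp_mem (L := L) r
  have h2 : r ∈ Ico (0:ℝ) (0 + L) := by simpa using hr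
  exact (AddCircle.coe_eq_coe_iff_of_mem_Ico h1 h2).mp (coe_rp _)

lemma rp_zero : rp L (0 : AddCircle L) = 0 := by
  have : ((0:ℝ) : AddCircle L) = 0 := by norm_cast
  rw [← this, rp_coe ⟨le_refl _, hLfact.out⟩]

/-- additivity mod `L·ℤ` -/
lemma rp_add (z w : AddCircle L) : ∃ n : ℤ, rp L (z + w) = rp L z + rp L w + n * L := by
  have : ((rp L z + rp L w - rp L (z + w) : ℝ) : AddCircle L) = 0 := by
    rw [AddCircle.coe_sub, AddCircle.coe_add, coe_rp, coe_rp, coe_rp]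
    abel
  obtain ⟨n, hn⟩ := (AddCircle.coe_eq_zero_iff L).mp this
  refine ⟨-n, ?_⟩
  rw [zsmul_eq_mul] at hn
  push_cast
  linarith [hn]

lemma coe_zero' : ((0:ℝ) : AddCircle L) = 0 := rfl

lemma rp_pos {z : AddCircle L} (hz : z ≠ 0) : 0 < rp L z := by
  rcases lt_or_eq_of_le (rp_nonneg z) with h | h
  · exact h
  · exfalso
    apply hz
    have h2 := coe_rp z
    rw [← h, coe_zero'] at h2
    exact h2.symm

lemma rp_neg {z : AddCircle L} (hz : z ≠ 0) : rp L (-z) = L - rp L z := by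
  have hpos : 0 < rp L z := rp_pos hz
  have key : (((L - rp L z : ℝ)) : AddCircle L) = -z := by
    rw [AddCircle.coe_sub, AddCircle.coe_period, coe_rp, zero_sub]
  rw [← key, rp_coe ⟨by linarith [rp_lt z], by linarith⟩]

lemma rp_eq_zero_iff {z : AddCircle L} : rp L z = 0 ↔ z = 0 := by
  constructor
  · intro h
    rw [← coe_rp z, h]; norm_cast
  · rintro rfl; exact rp_zero

/-- distance formula -/
lemma dist_eq (u v : AddCircle L) :
    dist u v = min (rp L (u - v)) (L - rp L (u - v)) := by
  set r := rp L (u - v) with hr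
  have h0 : 0 ≤ r := rp_nonneg _
  have h1 : r < L := rp_lt _
  have hL0 : 0 < L := hLfact.out
  have hd : dist u v = ‖(r : AddCircle L)‖ := by
    rw [coe_rp, dist_eq_norm]
  rw [hd, AddCircle.norm_eq]
  rcases le_or_gt (L/2) r with h | h
  · have hround : round (L⁻¹ * r) = 1 := by
      rw [round_eq]
      have h2 : L⁻¹ * r < 1 := by rw [inv_mul_lt_iff₀ hL0]; linarith
      have h3 : (1:ℝ)/2 ≤ L⁻¹ * r := by rw [le_inv_mul_iff₀ hL0]; linarith
      have : ⌊L⁻¹ * r + 1/2⌋ = 1 := by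
        rw [Int.floor_eq_iff] <;> push_cast <;> constructor <;> linarith
      simpa using this
    rw [hround]
    rw [abs_of_nonpos (by push_cast; linarith)]
    rw [min_eq_right (by linarith)]
    push_cast; ring
  · have hround : round (L⁻¹ * r) = 0 := by
      rw [round_eq]
      have h2 : L⁻¹ * r < 1/2 := by rw [inv_mul_lt_iff₀ hL0]; linarith
      have h3 : (0:ℝ) ≤ L⁻¹ * r := by positivity
      have : ⌊L⁻¹ * r + 1/2⌋ = 0 := by
        rw [Int.floor_eq_iff] <;> push_cast <;> constructor <;> linarith
      simpa using this
    rw [hround]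
    rw [abs_of_nonneg (by push_cast; linarith)]
    rw [min_eq_left (by linarith)]
    push_cast; ring


lemma idf_nonint {l m : ℕ} (hm : 0 < m) (hLdef : L = (l:ℝ)/(m:ℝ))
    {S : Set (AddCircle L)} (hidf : IntegerDistanceFree m S)
    {u v : AddCircle L} (hu : u ∈ S) (hv : v ∈ S) (huv : u ≠ v) (n : ℤ) :
    (m:ℝ) * rp L (u - v) ≠ (n:ℝ) := by
  intro h
  have hm' : (0:ℝ) < m := by exact_mod_cast hm
  have hrp : rp L (u - v) = (n:ℝ)/m := by field_simp; linarith
  have hpos : 0 < rp L (u - v) := rp_pos (sub_ne_zero.mpr huv)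
  have hlt : rp L (u - v) < L := rp_lt _
  have hn0 : (0:ℝ) < (n:ℝ) := by
    have h2 := hpos; rw [hrp] at h2
    nlinarith
  have hnl : (n:ℝ) < (l:ℝ) := by
    have h2 := hlt; rw [hrp, hLdef] at h2
    have := (div_lt_div_iff_of_pos_right hm').mp h2
    exact this
  set j : ℤ := min n (l - n) with hj
  have hj0 : 0 ≤ j := by
    have : (0:ℝ) < (l:ℝ) - n := by linarith
    have h1 : (0:ℝ) ≤ ((l:ℤ) - n : ℤ) := by push_cast; linarith
    have h2 : (0:ℤ) ≤ (l:ℤ) - n := by exact_mod_cast h1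
    have h3 : (0:ℤ) ≤ n := by
      have : (0:ℝ) ≤ (n:ℝ) := le_of_lt hn0
      exact_mod_cast this
    exact le_min h3 h2
  have hdist : dist u v = (j:ℝ)/m := by
    rw [dist_eq, hrp, hLdef]
    have hcast : ((j:ℤ):ℝ) = min (n:ℝ) ((l:ℝ) - n) := by
      rw [hj]; push_cast; rfl
    rw [hcast, ← min_div_div_right hm'.le, sub_div]
  apply hidf u hu v hv huv j.toNat
  rw [hdist]
  congr 1
  exact_mod_cast (Int.toNat_of_nonneg hj0).symm


lemma exists_lift_dist (z z' : AddCircle L) :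
    ∃ d : ℝ, |d| = dist z' z ∧ z' = z + (d : AddCircle L) := by
  rcases le_total (rp L (z' - z)) (L - rp L (z' - z)) with h | h
  · refine ⟨rp L (z' - z), ?_, ?_⟩
    · rw [dist_eq, abs_of_nonneg (rp_nonneg _), min_eq_left h]
    · rw [coe_rp]; abel
  · refine ⟨rp L (z' - z) - L, ?_, ?_⟩
    · rw [dist_eq, min_eq_right h, abs_of_nonpos (by linarith [rp_lt (z' - z)])]; ring
    · have hc : ((rp L (z' - z) - L : ℝ) : AddCircle L) = z' - z := by
        rw [AddCircle.coe_sub, AddCircle.coe_period, coe_rp, sub_zero]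
      rw [hc]; abel

lemma rp_close {z z' : AddCircle L} {c : ℝ} (hd : dist z' z < c)
    (h1 : c ≤ rp L z) (h2 : rp L z + c ≤ L) : |rp L z' - rp L z| < c := by
  obtain ⟨d, hda, hz'⟩ := exists_lift_dist z z'
  have hdc : |d| < c := by rw [hda]; exact hd
  have habs := abs_lt.mp hdc
  have hmem : rp L z + d ∈ Ico (0:ℝ) L := ⟨by linarith, by linarith⟩
  have hz'' : z' = ((rp L z + d : ℝ) : AddCircle L) := by
    rw [AddCircle.coe_add, coe_rp, hz']
  rw [hz'', rp_coe hmem, add_sub_cancel_left]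
  exact hdc

lemma dist_sub_right' (a b c : AddCircle L) : dist (a - c) (b - c) = dist a b := by
  rw [dist_eq_norm, dist_eq_norm, sub_sub_sub_cancel_right]

/-- real-valued directed quantized distance -/
def QR (L : ℝ) [Fact (0 < L)] (m : ℕ) (u v : AddCircle L) : ℝ := (m : ℝ) * rp L (u - v)

/-- integer directed quantized distance -/
def Qd (L : ℝ) [Fact (0 < L)] (m : ℕ) (u v : AddCircle L) : ℤ := ⌊QR L m u v⌋

lemma QR_nonneg (m : ℕ) (u v : AddCircle L) : 0 ≤ QR L m u v :=
  mul_nonneg (by positivity) (rp_nonneg _)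

lemma Qd_nonneg (m : ℕ) (u v : AddCircle L) : 0 ≤ Qd L m u v :=
  Int.floor_nonneg.mpr (QR_nonneg m u v)

lemma Qd_le_QR (m : ℕ) (u v : AddCircle L) : (Qd L m u v : ℝ) ≤ QR L m u v := Int.floor_le _

lemma QR_lt_Qd_add_one (m : ℕ) (u v : AddCircle L) : QR L m u v < Qd L m u v + 1 :=
  Int.lt_floor_add_one _

section Rational

variable {l m : ℕ} (hm : 0 < m) (hLdef : L = (l:ℝ)/(m:ℝ))
include hm hLdef

lemma mL_eq : (m:ℝ) * L = l := by
  have hm' : (0:ℝ) < m := by exact_mod_cast hm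
  rw [hLdef]; field_simp

lemma QR_lt_l (u v : AddCircle L) : QR L m u v < l := by
  have h := rp_lt (u - v)
  have hm' : (0:ℝ) < m := by exact_mod_cast hm
  have := mL_eq hm hLdef
  calc QR L m u v < (m:ℝ) * L := by
        unfold QR; exact (mul_lt_mul_iff_right₀ hm').mpr h
    _ = l := this

lemma Qd_lt_l (u v : AddCircle L) : Qd L m u v < (l:ℤ) := by
  have h := QR_lt_l hm hLdef u v
  have h2 := Qd_le_QR (L := L) m u v
  exact_mod_cast lt_of_le_of_lt h2 h

/-- chain rule mod `l` -/
lemma QR_chain (u v w : AddCircle L) :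
    ∃ n : ℤ, QR L m u w = QR L m u v + QR L m v w + n * l := by
  obtain ⟨n, hn⟩ := rp_add (u - v) (v - w)
  have hsum : (u - v) + (v - w) = u - w := by abel
  rw [hsum] at hn
  refine ⟨n, ?_⟩
  unfold QR
  rw [hn]
  have hml := mL_eq hm hLdef
  have : ((n:ℝ)) * l = (n:ℝ) * ((m:ℝ) * L) := by rw [hml]
  rw [this]
  ring

/-- reversal: if `QR u v` is strictly between its floor and floor+1 then
`Qd v u = l - 1 - Qd u v`. -/
lemma Qd_rev {u v : AddCircle L} (h1 : (Qd L m u v : ℝ) < QR L m u v) :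
    Qd L m v u = (l:ℤ) - 1 - Qd L m u v ∧ (Qd L m v u : ℝ) < QR L m v u := by
  have h0 : (0:ℝ) ≤ (Qd L m u v : ℝ) := by exact_mod_cast Qd_nonneg m u v
  have hQRdef : QR L m u v = (m:ℝ) * rp L (u - v) := rfl
  have hQdd : ((Qd L m u v : ℤ) : ℝ) = ((⌊QR L m u v⌋ : ℤ) : ℝ) := rfl
  have hm' : (0:ℝ) < m := by exact_mod_cast hm
  have hrpos : 0 < rp L (u - v) := by
    have hQR : 0 < QR L m u v := lt_of_le_of_lt h0 h1
    rcases lt_or_ge 0 (rp L (u - v)) with h | h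
    · exact h
    · exfalso
      have := mul_nonpos_of_nonneg_of_nonpos hm'.le h
      linarith [hQRdef]
  have hne : u - v ≠ 0 := by
    intro h; rw [h, rp_zero] at hrpos; linarith
  have hneg : v - u = -(u - v) := by abel
  have hQRrev : QR L m v u = l - QR L m u v := by
    unfold QR
    rw [hneg, rp_neg hne]
    have hml := mL_eq hm hLdef
    rw [mul_sub, hml]
  have h2 := QR_lt_Qd_add_one (L := L) m u v
  have hfloor : Qd L m v u = (l:ℤ) - 1 - Qd L m u v := by
    unfold Qd
    rw [hQRrev]
    rw [Int.floor_eq_iff]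
    constructor
    · push_cast; push_cast at hQdd; linarith
    · push_cast; push_cast at hQdd; linarith
  refine ⟨hfloor, ?_⟩
  rw [hQRrev, hfloor]
  push_cast
  push_cast at hQdd
  linarith

end Rational

/-- invariant of the back-and-forth -/
def Good {L : ℝ} [Fact (0 < L)] (m : ℕ) {S₁ S₂ : Set (AddCircle L)}
    (G₁ : SimpleGraph S₁) (G₂ : SimpleGraph S₂) (c : List (↥S₁ × ↥S₂)) : Prop :=
  ∀ p ∈ c, ∀ q ∈ c,
    (p.1 = q.1 ↔ p.2 = q.2) ∧ (G₁.Adj p.1 q.1 ↔ G₂.Adj p.2 q.2) ∧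
    Qd L m (p.1 : AddCircle L) (q.1 : AddCircle L) = Qd L m (p.2 : AddCircle L) (q.2 : AddCircle L)

lemma good_swap {m : ℕ} {S₁ S₂ : Set (AddCircle L)}
    {G₁ : SimpleGraph S₁} {G₂ : SimpleGraph S₂} {c : List (↥S₁ × ↥S₂)}
    (h : Good m G₁ G₂ c) : Good m G₂ G₁ (c.map Prod.swap) := by
  intro p hp q hq
  rw [List.mem_map] at hp hq
  obtain ⟨p', hp', rfl⟩ := hp
  obtain ⟨q', hq', rfl⟩ := hq
  obtain ⟨h1, h2, h3⟩ := h p' hp' q' hq'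
  exact ⟨h1.symm, h2.symm, h3.symm⟩


section Extension

variable {l m : ℕ} {S₁ S₂ : Set (AddCircle L)}
  {G₁ : SimpleGraph S₁} {G₂ : SimpleGraph S₂}

lemma extend_good
    (hm : 0 < m) (hl3 : 3 ≤ l) (hLdef : L = (l:ℝ)/(m:ℝ))
    (hS₂dense : Dense S₂)
    (hidf₁ : IntegerDistanceFree m S₁) (hidf₂ : IntegerDistanceFree m S₂)
    (hut₁ : HasUnitThreshold G₁) (hut₂ : HasUnitThreshold G₂) (hgec₂ : IsGEC G₂)
    (c : List (↥S₁ × ↥S₂)) (hGood : Good m G₁ G₂ c) (s : ↥S₁) :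
    ∃ v : ↥S₂, Good m G₁ G₂ ((s, v) :: c) := by
  classical
  have hL0 : (0:ℝ) < L := hLfact.out
  have hm' : (0:ℝ) < m := by exact_mod_cast hm
  have hml : (m:ℝ) * L = l := mL_eq hm hLdef
  have hl3' : (3:ℝ) ≤ (l:ℝ) := by exact_mod_cast hl3
  have hQzero : ∀ u : AddCircle L, Qd L m u u = 0 := by
    intro u
    unfold Qd QR
    rw [sub_self, rp_zero, mul_zero]
    exact Int.floor_zero
  -- the space is nonempty, hence S₂ is nonempty
  have hS₂ne : S₂.Nonempty := hS₂dense.nonempty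
  by_cases hdup : ∃ p ∈ c, p.1 = s
  · -- s is already in the domain
    obtain ⟨p, hp, hps⟩ := hdup
    refine ⟨p.2, ?_⟩
    have hsp : (s, p.2) = p := by rw [← hps]
    intro a ha b hb
    rcases List.mem_cons.mp ha with ha' | ha' <;> rcases List.mem_cons.mp hb with hb' | hb'
    · subst ha'; subst hb'; rw [hsp]; exact hGood p hp p hp
    · subst ha'; rw [hsp]; exact hGood p hp b hb'
    · subst hb'; rw [hsp]; exact hGood a ha' p hp
    · exact hGood a ha' b hb'
  push_neg at hdup
  have hs : ∀ p ∈ c, p.1 ≠ s := hdup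
  by_cases hc : c = []
  · -- empty list : any point of S₂ works
    obtain ⟨z, hz⟩ := hS₂ne
    refine ⟨⟨z, hz⟩, ?_⟩
    subst hc
    intro a ha b hb
    simp only [List.mem_cons, List.not_mem_nil, or_false] at ha hb
    subst ha; subst hb
    refine ⟨⟨fun _ => rfl, fun _ => rfl⟩, by simp, by rw [hQzero, hQzero]⟩
  -- main case
  obtain ⟨p0, hp0⟩ := List.exists_mem_of_ne_nil c hc
  set sc : AddCircle L := (s : AddCircle L) with hsc
  set k : ↥S₁ × ↥S₂ → ℤ := fun p => Qd L m sc (p.1 : AddCircle L) with hk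
  set θ : ↥S₁ × ↥S₂ → ℝ := fun p => QR L m sc (p.1 : AddCircle L) - k p with hθ
  set fx : ↥S₁ × ↥S₂ → ℝ := fun p =>
    QR L m (p.1 : AddCircle L) (p0.1 : AddCircle L) -
      Qd L m (p.1 : AddCircle L) (p0.1 : AddCircle L) with hfx
  set fy : ↥S₁ × ↥S₂ → ℝ := fun p =>
    QR L m (p.2 : AddCircle L) (p0.2 : AddCircle L) -
      Qd L m (p.2 : AddCircle L) (p0.2 : AddCircle L) with hfy
  set w : ↥S₁ × ↥S₂ → ℝ := fun p => fy p - θ p - fx p + θ p0 with hw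
  clear_value k θ fx fy w
  have hsne : ∀ p ∈ c, sc ≠ (p.1 : AddCircle L) := by
    intro p hp h
    exact hs p hp (Subtype.ext h.symm)
  -- basic fractional bounds
  have hθb : ∀ p ∈ c, 0 < θ p ∧ θ p < 1 := by
    intro p hp
    have hni := idf_nonint hm hLdef hidf₁ s.2 p.1.2 (hsne p hp) (Qd L m sc ↑p.1)
    have h1 : (Qd L m sc ↑p.1 : ℝ) ≤ QR L m sc ↑p.1 := Qd_le_QR m _ _
    have h2 : QR L m sc ↑p.1 < Qd L m sc ↑p.1 + 1 := QR_lt_Qd_add_one m _ _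
    have hne : QR L m sc ↑p.1 ≠ (Qd L m sc ↑p.1 : ℝ) := hni
    constructor
    · simp only [hθ, hk]
      cases' lt_or_eq_of_le h1 with h h
      · linarith
      · exact absurd h.symm hne
    · simp only [hθ, hk]; linarith
  have hfxb : ∀ p : ↥S₁ × ↥S₂, 0 ≤ fx p ∧ fx p < 1 := by
    intro p
    have h1 : (Qd L m (↑p.1) (↑p0.1) : ℝ) ≤ QR L m (↑p.1) (↑p0.1) := Qd_le_QR m _ _
    have h2 : QR L m (↑p.1) (↑p0.1) < Qd L m (↑p.1) (↑p0.1) + 1 := QR_lt_Qd_add_one m _ _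
    exact ⟨by simp only [hfx]; linarith, by simp only [hfx]; linarith⟩
  have hfyb : ∀ p : ↥S₁ × ↥S₂, 0 ≤ fy p ∧ fy p < 1 := by
    intro p
    have h1 : (Qd L m (↑p.2) (↑p0.2) : ℝ) ≤ QR L m (↑p.2) (↑p0.2) := Qd_le_QR m _ _
    have h2 : QR L m (↑p.2) (↑p0.2) < Qd L m (↑p.2) (↑p0.2) + 1 := QR_lt_Qd_add_one m _ _
    exact ⟨by simp only [hfy]; linarith, by simp only [hfy]; linarith⟩
  -- the integer relation per point
  have hErel : ∀ p ∈ c, ∃ n E : ℤ, (E = 0 ∨ E = 1) ∧ θ p + fx p - θ p0 = (E:ℝ) ∧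
      (E : ℝ) = (k p0 : ℝ) - k p - (Qd L m (↑p.1) (↑p0.1) : ℝ) - n * l := by
    intro p hp
    obtain ⟨n, hn⟩ := QR_chain hm hLdef sc (↑p.1) (↑p0.1)
    refine ⟨n, k p0 - k p - Qd L m (↑p.1) (↑p0.1) - n * l, ?_, ?_, ?_⟩
    rotate_left
    · -- equality
      have hθp : θ p = QR L m sc ↑p.1 - k p := by simp only [hθ]
      have hθ0 : θ p0 = QR L m sc ↑p0.1 - k p0 := by simp only [hθ]
      have hfxp : fx p = QR L m (↑p.1) (↑p0.1) - Qd L m (↑p.1) (↑p0.1) := by simp only [hfx]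
      push_cast
      linarith
    · push_cast; ring
    · -- E ∈ {0,1}
      have hb1 := hθb p hp
      have hb2 := hθb p0 hp0
      have hb3 := hfxb p
      have hθp : θ p = QR L m sc ↑p.1 - k p := by simp only [hθ]
      have hθ0 : θ p0 = QR L m sc ↑p0.1 - k p0 := by simp only [hθ]
      have hfxp : fx p = QR L m (↑p.1) (↑p0.1) - Qd L m (↑p.1) (↑p0.1) := by simp only [hfx]
      have hEr : ((k p0 - k p - Qd L m (↑p.1) (↑p0.1) - n * l : ℤ) : ℝ)
          = θ p + fx p - θ p0 := by push_cast; linarith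
      have hlow : (-1 : ℝ) < ((k p0 - k p - Qd L m (↑p.1) (↑p0.1) - n * l : ℤ) : ℝ) := by
        rw [hEr]; linarith
      have hhigh : ((k p0 - k p - Qd L m (↑p.1) (↑p0.1) - n * l : ℤ) : ℝ) < 2 := by
        rw [hEr]; linarith
      have hlow' : (-1 : ℤ) < k p0 - k p - Qd L m (↑p.1) (↑p0.1) - n * l := by exact_mod_cast hlow
      have hhigh' : k p0 - k p - Qd L m (↑p.1) (↑p0.1) - n * l < 2 := by exact_mod_cast hhigh
      omega
  have hwb : ∀ p ∈ c, -1 < w p ∧ w p < 1 := by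
    intro p hp
    by_cases hpp0 : p.1 = p0.1
    · have hpp0' := (hGood p hp p0 hp0).1.mp hpp0
      have hself : ∀ u : AddCircle L, QR L m u u = 0 := by
        intro u; unfold QR; rw [sub_self, rp_zero, mul_zero]
      have : w p = 0 := by
        simp only [hw, hfy, hθ, hfx, hk, hpp0, hpp0', hself, hQzero]
        push_cast
        ring
      rw [this]; norm_num
    · have hpp0'' : p.2 ≠ p0.2 := fun h => hpp0 ((hGood p hp p0 hp0).1.mpr h)
      have hcne : (↑p.2 : AddCircle L) ≠ (↑p0.2 : AddCircle L) := fun h => hpp0'' (Subtype.ext h)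
      have hfypos : 0 < fy p := by
        have hni := idf_nonint hm hLdef hidf₂ p.2.2 p0.2.2 hcne (Qd L m (↑p.2) (↑p0.2))
        have h1 : ((Qd L m (↑p.2) (↑p0.2)):ℝ) ≤ QR L m (↑p.2) (↑p0.2) := Qd_le_QR m _ _
        simp only [hfy]
        cases' lt_or_eq_of_le h1 with h h
        · linarith
        · exact absurd h.symm hni
      obtain ⟨n, E, hE01, hEeq, _⟩ := hErel p hp
      have hweq : w p = fy p - (θ p + fx p - θ p0) := by simp only [hw]; ring
      rw [hEeq] at hweq
      have := hfyb p
      rcases hE01 with rfl | rfl <;> push_cast at hweq <;> constructor <;> linarith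
  -- pairwise bound
  have hwpair : ∀ p ∈ c, ∀ q ∈ c, w p - w q < 1 := by
    intro p hp q hq
    by_cases hpq : p.1 = q.1
    · have h2 := (hGood p hp q hq).1.mp hpq
      have : w p = w q := by
        simp only [hw, hfy, hθ, hfx, hk, hpq, h2]
      linarith
    · have hpq2 : p.2 ≠ q.2 := fun h => hpq ((hGood p hp q hq).1.mpr h)
      have hcne1 : (↑p.1 : AddCircle L) ≠ (↑q.1 : AddCircle L) :=
        fun h => hpq (Subtype.ext h)
      have hcne2 : (↑p.2 : AddCircle L) ≠ (↑q.2 : AddCircle L) :=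
        fun h => hpq2 (Subtype.ext h)
      set α : ℝ := QR L m (↑p.1) (↑q.1) with hα
      set β : ℝ := QR L m (↑p.2) (↑q.2) with hβ
      set Qα : ℤ := Qd L m (↑p.1) (↑q.1) with hQα
      have hfloorαβ : Qα = Qd L m (↑p.2) (↑q.2) := (hGood p hp q hq).2.2
      have hfα : (Qα : ℝ) < α ∧ α < Qα + 1 := by
        have hni := idf_nonint hm hLdef hidf₁ p.1.2 q.1.2 hcne1 Qα
        have h1 : (Qα:ℝ) ≤ α := Qd_le_QR m _ _
        have h2 : α < Qα + 1 := QR_lt_Qd_add_one m _ _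
        exact ⟨lt_of_le_of_ne h1 (fun h => hni h.symm), h2⟩
      have hfβ : (Qα : ℝ) < β ∧ β < Qα + 1 := by
        have hni := idf_nonint hm hLdef hidf₂ p.2.2 q.2.2 hcne2 (Qd L m (↑p.2) (↑q.2))
        have h1 : ((Qd L m (↑p.2) (↑q.2)):ℝ) ≤ β := Qd_le_QR m _ _
        have h2 : β < (Qd L m (↑p.2) (↑q.2)) + 1 := QR_lt_Qd_add_one m _ _
        rw [← hfloorαβ] at h1 h2 hni
        exact ⟨lt_of_le_of_ne h1 (fun h => hni h.symm), h2⟩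
      obtain ⟨n₁, hr1⟩ := QR_chain hm hLdef sc (↑p.1) (↑q.1)
      obtain ⟨n₂, hr2⟩ := QR_chain hm hLdef (↑p.1) (↑q.1) (↑p0.1)
      obtain ⟨n₃, hr3⟩ := QR_chain hm hLdef (↑p.2) (↑q.2) (↑p0.2)
      -- J relation
      set J : ℤ := k p + Qα + n₁ * l - k q with hJ
      have hθp : θ p = QR L m sc ↑p.1 - k p := by simp only [hθ]
      have hθq : θ q = QR L m sc ↑q.1 - k q := by simp only [hθ]
      have hJeq : θ q - θ p - (α - Qα) = (J:ℝ) := by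
        rw [hJ]
        push_cast
        -- hr1 : QR sc q1 = QR sc p1 + α + n₁ l
        linarith
      have hJb : J = -1 ∨ J = 0 := by
        have hb1 := hθb p hp
        have hb2 := hθb q hq
        have hl1 : (-2:ℝ) < (J:ℝ) := by rw [← hJeq]; linarith [hfα.1, hfα.2]
        have hl2 : (J:ℝ) < 1 := by rw [← hJeq]; linarith [hfα.1, hfα.2]
        have hl1' : (-2:ℤ) < J := by exact_mod_cast hl1
        have hl2' : J < 1 := by exact_mod_cast hl2
        omega
      -- floors with p0
      have hyp0p : Qd L m (↑p.2) (↑p0.2) = Qd L m (↑p.1) (↑p0.1) :=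
        ((hGood p hp p0 hp0).2.2).symm
      have hyp0q : Qd L m (↑q.2) (↑p0.2) = Qd L m (↑q.1) (↑p0.1) :=
        ((hGood q hq p0 hp0).2.2).symm
      have hfxp : fx p = QR L m (↑p.1) (↑p0.1) - Qd L m (↑p.1) (↑p0.1) := by simp only [hfx]
      have hfxq : fx q = QR L m (↑q.1) (↑p0.1) - Qd L m (↑q.1) (↑p0.1) := by simp only [hfx]
      have hfyp : fy p = QR L m (↑p.2) (↑p0.2) - Qd L m (↑p.2) (↑p0.2) := by simp only [hfy]
      have hfyq : fy q = QR L m (↑q.2) (↑p0.2) - Qd L m (↑q.2) (↑p0.2) := by simp only [hfy]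
      have hwp : w p = fy p - θ p - fx p + θ p0 := by simp only [hw]
      have hwq : w q = fy q - θ q - fx q + θ p0 := by simp only [hw]
      -- main identity : w p - w q = (β - Qα) + J + (n₃ - n₂) * l
      have hmain : w p - w q = (β - (Qα:ℝ)) + (J:ℝ) + ((n₃ - n₂ : ℤ):ℝ) * l := by
        have e1 : fy p - fy q = β + (n₃:ℝ) * l - Qd L m (↑p.1) (↑p0.1)
            + Qd L m (↑q.1) (↑p0.1) := by
          rw [hfyp, hfyq, hyp0p, hyp0q]
          push_cast
          linarith
        have e2 : fx p - fx q = α + (n₂:ℝ) * l - Qd L m (↑p.1) (↑p0.1)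
            + Qd L m (↑q.1) (↑p0.1) := by
          rw [hfxp, hfxq]
          push_cast
          linarith
        rw [hwp, hwq]
        push_cast
        linarith [e1, e2, hJeq]
      have hN0 : n₃ - n₂ = 0 := by
        have hb1 := hwb p hp
        have hb2 := hwb q hq
        have hJcases : (-1:ℝ) ≤ (J:ℝ) ∧ (J:ℝ) ≤ 0 := by
          rcases hJb with h | h <;> rw [h] <;> norm_num
        have hbound1 : ((n₃ - n₂ : ℤ):ℝ) * l < 3 := by
          have : w p - w q < 2 := by linarith
          rw [hmain] at this
          linarith [hfβ.1, hfβ.2, hJcases.1, hJcases.2]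
        have hbound2 : (-3:ℝ) < ((n₃ - n₂ : ℤ):ℝ) * l := by
          have : -2 < w p - w q := by linarith
          rw [hmain] at this
          linarith [hfβ.1, hfβ.2, hJcases.1, hJcases.2]
        by_contra hN
        rcases lt_or_gt_of_ne hN with h | h
        · have h1 : (n₃ - n₂ : ℤ) ≤ -1 := by omega
          have h1' : ((n₃ - n₂ : ℤ):ℝ) ≤ -1 := by exact_mod_cast h1
          have h2 : ((n₃ - n₂ : ℤ):ℝ) * l ≤ -1 * l := by
            apply mul_le_mul_of_nonneg_right h1' (by positivity)
          linarith
        · have h1 : (1:ℤ) ≤ (n₃ - n₂ : ℤ) := by omega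
          have h1' : (1:ℝ) ≤ ((n₃ - n₂ : ℤ):ℝ) := by exact_mod_cast h1
          have h2 : 1 * (l:ℝ) ≤ ((n₃ - n₂ : ℤ):ℝ) * l := by
            apply mul_le_mul_of_nonneg_right h1' (by positivity)
          linarith
      rw [hN0] at hmain
      push_cast at hmain
      have hJcases : (J:ℝ) ≤ 0 := by
        rcases hJb with h | h <;> rw [h] <;> norm_num
      linarith [hfβ.2, hmain]
  -- choose τ
  set F : Finset (↥S₁ × ↥S₂) := c.toFinset with hF
  have hFne : F.Nonempty := ⟨p0, List.mem_toFinset.mpr hp0⟩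
  set wmax := F.sup' hFne w with hwmax
  set wmin := F.inf' hFne w with hwmin
  have hgap : wmax - wmin < 1 := by
    obtain ⟨pM, hpM, hM⟩ := Finset.exists_mem_eq_sup' hFne w
    obtain ⟨pm2, hpm2, hm2⟩ := Finset.exists_mem_eq_inf' hFne w
    rw [hwmax, hM, hwmin, hm2]
    exact hwpair pM (List.mem_toFinset.mp hpM) pm2 (List.mem_toFinset.mp hpm2)
  set τ : ℝ := (wmax + wmin + 1)/2 with hτdef
  clear_value wmax wmin
  clear_value τ
  have hτ : ∀ p ∈ c, w p < τ ∧ τ < w p + 1 := by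
    intro p hp
    have h1 : w p ≤ wmax := by
      rw [hwmax]; exact Finset.le_sup' w (List.mem_toFinset.mpr hp)
    have h2 : wmin ≤ w p := by
      rw [hwmin]; exact Finset.inf'_le w (List.mem_toFinset.mpr hp)
    have hgap2 : wmax < wmin + 1 := by linarith
    constructor
    · rw [hτdef]; linarith
    · rw [hτdef]; linarith
  set r : ℝ := ((k p0 : ℝ) + τ)/m with hrdef
  set t : AddCircle L := (p0.2 : AddCircle L) + ((r : ℝ) : AddCircle L) with htdef
  clear_value r t
  have hkb : ∀ p ∈ c, 0 ≤ k p ∧ k p ≤ (l:ℤ) - 1 := by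
    intro p hp
    have h1 : 0 ≤ Qd L m sc (↑p.1 : AddCircle L) := Qd_nonneg m _ _
    have h2 : Qd L m sc (↑p.1 : AddCircle L) < (l:ℤ) := Qd_lt_l hm hLdef sc _
    have hkp : k p = Qd L m sc (↑p.1 : AddCircle L) := by simp only [hk]
    omega
  have hC : ∀ p ∈ c, rp L (t - (↑p.2 : AddCircle L)) = ((k p : ℝ) + (τ - w p))/m := by
    intro p hp
    obtain ⟨n, E, hE01, hEeq, hEval⟩ := hErel p hp
    have hfyp : fy p = QR L m (↑p.2) (↑p0.2) - Qd L m (↑p.2) (↑p0.2) := by simp only [hfy]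
    have hyp0p : Qd L m (↑p.2) (↑p0.2) = Qd L m (↑p.1) (↑p0.1) := ((hGood p hp p0 hp0).2.2).symm
    have hyp0p' : ((Qd L m (↑p.2) (↑p0.2) : ℤ):ℝ) = ((Qd L m (↑p.1) (↑p0.1) : ℤ):ℝ) := by
      exact_mod_cast congrArg (fun z : ℤ => (z:ℝ)) hyp0p
    have hwp : w p = fy p - θ p - fx p + θ p0 := by simp only [hw]
    have hm0 : (m:ℝ) ≠ 0 := ne_of_gt hm'
    have hgm : (m:ℝ) * (((k p : ℝ) + (τ - w p))/m - (r - rp L ((↑p.2 : AddCircle L) - ↑p0.2)))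
        = (m:ℝ) * (((-n : ℤ):ℝ) * L) := by
      have h1 : (m:ℝ) * (((k p : ℝ) + (τ - w p))/m) = (k p : ℝ) + (τ - w p) := by
        field_simp
      have h2 : (m:ℝ) * r = (k p0 : ℝ) + τ := by rw [hrdef]; field_simp
      have h4 : (m:ℝ) * (((-n : ℤ):ℝ) * L) = ((-n : ℤ):ℝ) * ((m:ℝ) * L) := by ring
      have h5 : (m:ℝ) * rp L ((↑p.2 : AddCircle L) - ↑p0.2) = QR L m (↑p.2) (↑p0.2) := rfl
      rw [h4, hml, mul_sub, h1, mul_sub, h2, h5]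
      push_cast
      push_cast at hEval hEeq
      rw [hwp, hfyp]
      linarith [hyp0p']
    have hreal := mul_left_cancel₀ hm0 hgm
    have hgb : 0 ≤ ((k p : ℝ) + (τ - w p))/m ∧ ((k p : ℝ) + (τ - w p))/m < L := by
      obtain ⟨hk0, hk1⟩ := hkb p hp
      obtain ⟨ht1, ht2⟩ := hτ p hp
      have hk0' : (0:ℝ) ≤ (k p : ℝ) := by exact_mod_cast hk0
      have hk1' : (k p : ℝ) ≤ (l:ℝ) - 1 := by
        have : ((k p : ℤ):ℝ) ≤ (((l:ℤ) - 1 : ℤ):ℝ) := by exact_mod_cast hk1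
        push_cast at this; linarith
      constructor
      · apply div_nonneg (by linarith) hm'.le
      · rw [div_lt_iff₀ hm']
        have : L * m = (l:ℝ) := by rw [mul_comm]; exact hml
        linarith
    have hcoe1 : ((((k p : ℝ) + (τ - w p))/m : ℝ) : AddCircle L) = t - ↑p.2 := by
      have e1 : (((k p : ℝ) + (τ - w p))/m)
          = (r - rp L ((↑p.2 : AddCircle L) - ↑p0.2)) + ((-n : ℤ):ℝ) * L := by
        linarith [hreal]
      rw [e1, AddCircle.coe_add, AddCircle.coe_sub, coe_rp]
      have hnL : ((((-n : ℤ):ℝ) * L : ℝ) : AddCircle L) = 0 := by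
        rw [AddCircle.coe_eq_zero_iff]
        exact ⟨-n, by rw [zsmul_eq_mul]⟩
      rw [hnL, add_zero, htdef]
      abel
    rw [← hcoe1, rp_coe ⟨hgb.1, hgb.2⟩]
  have hQt : ∀ p ∈ c, (k p : ℝ) < (m:ℝ) * rp L (t - ↑p.2) ∧
      (m:ℝ) * rp L (t - ↑p.2) < (k p:ℝ) + 1 := by
    intro p hp
    rw [hC p hp]
    obtain ⟨ht1, ht2⟩ := hτ p hp
    have hfe : (m:ℝ) * (((k p : ℝ) + (τ - w p))/m) = (k p : ℝ) + (τ - w p) := by field_simp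
    rw [hfe]
    constructor <;> linarith
  -- distance classification
  have hclass : ∀ (u v : AddCircle L) (kz : ℤ), ((kz:ℝ) < (m:ℝ) * rp L (u - v)) →
      ((m:ℝ) * rp L (u - v) < (kz:ℝ) + 1) → (0 ≤ kz) →
      (((kz < m ∨ (l:ℤ) - m ≤ kz) → dist u v < 1) ∧
       ((m ≤ kz ∧ kz ≤ (l:ℤ) - m - 1) → 1 < dist u v) ∧ 0 < dist u v ∧ dist u v ≠ 1) := by
    intro u v kz h1 h2 hk0
    have hde := dist_eq u v
    set x := rp L (u - v) with hx
    have hx0 : 0 ≤ x := rp_nonneg _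
    have hxL : x < L := rp_lt _
    refine ⟨?_, ?_, ?_, ?_⟩
    · intro hnear
      rcases hnear with h | h
      · have hkm : (kz:ℝ) + 1 ≤ (m:ℝ) := by
          have : kz + 1 ≤ (m:ℤ) := by omega
          exact_mod_cast this
        have hxlt : (m:ℝ) * x < (m:ℝ) * 1 := by rw [mul_one]; linarith
        have hxlt' : x < 1 := lt_of_mul_lt_mul_left hxlt hm'.le
        rw [hde]
        exact lt_of_le_of_lt (min_le_left _ _) hxlt'
      · have h' : (l:ℝ) - m ≤ (kz:ℝ) := by
          have : ((l:ℤ) - m : ℤ) ≤ kz := h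
          have := (Int.cast_le (R := ℝ)).mpr this
          push_cast at this ⊢
          linarith
        have hL1 : (m:ℝ) * (L - x) < (m:ℝ) * 1 := by
          rw [mul_sub, hml, mul_one]; linarith
        have hL1' : L - x < 1 := lt_of_mul_lt_mul_left hL1 hm'.le
        rw [hde]
        exact lt_of_le_of_lt (min_le_right _ _) hL1'
    · rintro ⟨hf1, hf2⟩
      have hf1' : (m:ℝ) ≤ (kz:ℝ) := by exact_mod_cast hf1
      have hf2' : (kz:ℝ) ≤ (l:ℝ) - m - 1 := by
        have := (Int.cast_le (R := ℝ)).mpr hf2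
        push_cast at this ⊢
        linarith
      have hxgt : (m:ℝ) * 1 < (m:ℝ) * x := by rw [mul_one]; linarith
      have h1x : 1 < x := lt_of_mul_lt_mul_left hxgt hm'.le
      have hLx : (m:ℝ) * 1 < (m:ℝ) * (L - x) := by rw [mul_one, mul_sub, hml]; linarith
      have h2x : 1 < L - x := lt_of_mul_lt_mul_left hLx hm'.le
      rw [hde]
      exact lt_min h1x h2x
    · have hk0' : (0:ℝ) ≤ (kz:ℝ) := by exact_mod_cast hk0
      have hmx : 0 < (m:ℝ) * x := by linarith
      have hxpos : 0 < x := by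
        rcases lt_or_eq_of_le hx0 with h | h
        · exact h
        · exfalso; rw [← h, mul_zero] at hmx; exact lt_irrefl 0 hmx
      have hLxpos : 0 < L - x := by linarith
      rw [hde]
      exact lt_min hxpos hLxpos
    · intro hd1
      rw [hde] at hd1
      rcases le_total x (L - x) with h | h
      · rw [min_eq_left h] at hd1
        rw [hd1] at h1 h2
        have c1 : (kz:ℝ) < m := by linarith
        have c2 : (m:ℝ) < kz + 1 := by linarith
        have c1' : kz < (m:ℤ) := by exact_mod_cast c1
        have c2' : (m:ℤ) < kz + 1 := by exact_mod_cast c2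
        omega
      · rw [min_eq_right h] at hd1
        have hmlx : (m:ℝ) * (L - x) = m := by rw [hd1, mul_one]
        rw [mul_sub, hml] at hmlx
        have c1 : (kz:ℝ) < (l:ℝ) - m := by linarith
        have c2 : (l:ℝ) - m < kz + 1 := by linarith
        have c1' : kz < (l:ℤ) - m := by push_cast at c1 ⊢; exact_mod_cast c1
        have c2' : (l:ℤ) - m < kz + 1 := by push_cast at c2 ⊢; exact_mod_cast c2
        omega
  -- facts about s vs p.1
  have hscx : ∀ p ∈ c, (k p:ℝ) < (m:ℝ) * rp L (sc - ↑p.1) ∧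
      (m:ℝ) * rp L (sc - ↑p.1) < (k p:ℝ) + 1 := by
    intro p hp
    have hb := hθb p hp
    have hθp : θ p = QR L m sc ↑p.1 - k p := by simp only [hθ]
    have hQRr : QR L m sc ↑p.1 = (m:ℝ) * rp L (sc - ↑p.1) := rfl
    rw [hθp, hQRr] at hb
    constructor <;> linarith [hb.1, hb.2]
  have hclassS : ∀ p ∈ c,
      (((k p < m ∨ (l:ℤ) - m ≤ k p) → dist sc (↑p.1 : AddCircle L) < 1) ∧
       ((m ≤ k p ∧ k p ≤ (l:ℤ) - m - 1) → 1 < dist sc (↑p.1 : AddCircle L)) ∧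
       0 < dist sc (↑p.1 : AddCircle L) ∧ dist sc (↑p.1 : AddCircle L) ≠ 1) := by
    intro p hp
    exact hclass sc ↑p.1 (k p) (hscx p hp).1 (hscx p hp).2 (hkb p hp).1
  have hclassT : ∀ p ∈ c,
      (((k p < m ∨ (l:ℤ) - m ≤ k p) → dist t (↑p.2 : AddCircle L) < 1) ∧
       ((m ≤ k p ∧ k p ≤ (l:ℤ) - m - 1) → 1 < dist t (↑p.2 : AddCircle L)) ∧
       0 < dist t (↑p.2 : AddCircle L) ∧ dist t (↑p.2 : AddCircle L) ≠ 1) := by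
    intro p hp
    exact hclass t ↑p.2 (k p) (hQt p hp).1 (hQt p hp).2 (hkb p hp).1
  -- margins
  set μ : (↥S₁ × ↥S₂) → ℝ := fun p =>
    min (min ((τ - w p)/(m:ℝ)) ((1 - (τ - w p))/(m:ℝ))) (|dist t (↑p.2 : AddCircle L) - 1|) with hμ
  have hμpos : ∀ p ∈ c, 0 < μ p := by
    intro p hp
    obtain ⟨ht1, ht2⟩ := hτ p hp
    have h3 := (hclassT p hp).2.2.2
    have : 0 < |dist t (↑p.2 : AddCircle L) - 1| := by
      rcases lt_or_gt_of_ne h3 with h | h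
      · rw [abs_of_neg (by linarith)]; linarith
      · rw [abs_of_pos (by linarith)]; linarith
    simp only [hμ]
    refine lt_min (lt_min ?_ ?_) this
    · exact div_pos (by linarith) hm'
    · exact div_pos (by linarith) hm' 
  set εm : ℝ := F.inf' hFne μ with hεm
  clear_value μ
  have hεmpos : 0 < εm := by
    rw [hεm, Finset.lt_inf'_iff]
    intro p hpF
    exact hμpos p (List.mem_toFinset.mp hpF)
  have hεmle : ∀ p ∈ c, εm ≤ μ p := by
    intro p hp
    rw [hεm]
    exact Finset.inf'_le μ (List.mem_toFinset.mpr hp)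
  set ε : ℝ := εm/4 with hεdef
  clear_value εm
  clear_value ε
  have hεpos : 0 < ε := by rw [hεdef]; linarith [hεmpos]
  -- a point of S₂ near t
  obtain ⟨z, hzball, hzS⟩ := Metric.dense_iff.mp hS₂dense t ε hεpos
  set s₂ : ↥S₂ := ⟨z, hzS⟩ with hs₂
  have hzt : dist z t < ε := Metric.mem_ball.mp hzball
  -- the finsets A and B
  set Afin : Finset ↥S₂ := (F.filter (fun p => G₁.Adj s p.1)).image Prod.snd with hAfin
  set Bfin : Finset ↥S₂ := (F.filter
      (fun p => ¬ G₁.Adj s p.1 ∧ (k p < m ∨ (l:ℤ) - m ≤ k p))).image Prod.snd with hBfin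
  have hAmem : ∀ a : ↥S₂, a ∈ Afin ↔ ∃ p ∈ c, G₁.Adj s p.1 ∧ p.2 = a := by
    intro a
    simp only [hAfin, Finset.mem_image, Finset.mem_filter, hF, List.mem_toFinset]
    constructor
    · rintro ⟨p, ⟨hp, hadj⟩, hpa⟩
      exact ⟨p, hp, hadj, hpa⟩
    · rintro ⟨p, hp, hadj, hpa⟩
      exact ⟨p, ⟨hp, hadj⟩, hpa⟩
  have hBmem : ∀ a : ↥S₂, a ∈ Bfin ↔
      ∃ p ∈ c, (¬ G₁.Adj s p.1 ∧ (k p < m ∨ (l:ℤ) - m ≤ k p)) ∧ p.2 = a := by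
    intro a
    simp only [hBfin, Finset.mem_image, Finset.mem_filter, hF, List.mem_toFinset]
    constructor
    · rintro ⟨p, ⟨hp, hcond⟩, hpa⟩
      exact ⟨p, hp, hcond, hpa⟩
    · rintro ⟨p, hp, hcond, hpa⟩
      exact ⟨p, ⟨hp, hcond⟩, hpa⟩
  have hdisj : Disjoint Afin Bfin := by
    rw [Finset.disjoint_left]
    intro a haA haB
    obtain ⟨p, hp, hpadj, hpa⟩ := (hAmem a).mp haA
    obtain ⟨q, hq, hqcond, hqa⟩ := (hBmem a).mp haB
    have hpq2 : p.2 = q.2 := by rw [hpa, hqa]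
    have hpq1 : p.1 = q.1 := (hGood p hp q hq).1.mpr hpq2
    exact hqcond.1 (hpq1 ▸ hpadj)
  -- why adjacency implies nearness
  have hnear_of_adj : ∀ p ∈ c, G₁.Adj s p.1 → (k p < m ∨ (l:ℤ) - m ≤ k p) := by
    intro p hp hadj
    by_contra hfar
    push_neg at hfar
    have hfar' : (m:ℤ) ≤ k p ∧ k p ≤ (l:ℤ) - m - 1 := ⟨hfar.1, by omega⟩
    have := (hclassS p hp).2.1 hfar'
    have hlt := hut₁ s p.1 hadj
    have : dist sc (↑p.1 : AddCircle L) = dist (↑s : AddCircle L) ↑p.1 := rfl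
    linarith [hlt, (hclassS p hp).2.1 hfar']
  -- distance hypotheses for gec
  have hand : ∀ p ∈ c, (k p < m ∨ (l:ℤ) - m ≤ k p) →
      dist (↑p.2 : AddCircle L) (↑s₂ : AddCircle L) < 1 := by
    intro p hp hnear
    have h1 : dist t (↑p.2 : AddCircle L) < 1 := (hclassT p hp).1 hnear
    have hμle : μ p ≤ |dist t (↑p.2 : AddCircle L) - 1| := by
      simp only [hμ]; exact min_le_right _ _
    have habs : |dist t (↑p.2 : AddCircle L) - 1| = 1 - dist t (↑p.2 : AddCircle L) := by
      rw [abs_of_neg (by linarith)]; ring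
    have h2 : dist t (↑p.2 : AddCircle L) ≤ 1 - μ p := by rw [habs] at hμle; linarith
    have h3 : εm ≤ μ p := hεmle p hp
    calc dist (↑p.2 : AddCircle L) (↑s₂ : AddCircle L)
        ≤ dist (↑p.2 : AddCircle L) t + dist t (↑s₂ : AddCircle L) := dist_triangle _ _ _
      _ = dist t (↑p.2 : AddCircle L) + dist z t := by
          rw [dist_comm (↑p.2 : AddCircle L) t, dist_comm t z]
      _ < (1 - μ p) + ε := by linarith
      _ < 1 := by
          rw [hεdef]
          linarith
  have hAd : ∀ a ∈ Afin, dist (↑a : AddCircle L) (↑s₂ : AddCircle L) < 1 := by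
    intro a haA
    obtain ⟨p, hp, hpadj, hpa⟩ := (hAmem a).mp haA
    rw [← hpa]
    exact hand p hp (hnear_of_adj p hp hpadj)
  have hBd : ∀ b ∈ Bfin, dist (↑b : AddCircle L) (↑s₂ : AddCircle L) < 1 := by
    intro b hbB
    obtain ⟨p, hp, hcond, hpb⟩ := (hBmem b).mp hbB
    rw [← hpb]
    exact hand p hp hcond.2
  -- apply geometric existential closure
  obtain ⟨v, hvA, hvB, hvadj, hvnadj, hvd⟩ := hgec₂ s₂ Afin Bfin hdisj hAd hBd ε hεpos
  have hvt : dist (↑v : AddCircle L) t < εm/2 := by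
    calc dist (↑v : AddCircle L) t ≤ dist (↑v : AddCircle L) (↑s₂ : AddCircle L) + dist (↑s₂ : AddCircle L) t :=
          dist_triangle _ _ _
      _ < ε + ε := by
          have : dist (↑s₂ : AddCircle L) t = dist z t := rfl
          linarith [hvd, hzt]
      _ = εm/2 := by rw [hεdef]; ring
  -- the key floor facts for v
  have hQv : ∀ p ∈ c, (k p : ℝ) < (m:ℝ) * rp L ((↑v : AddCircle L) - ↑p.2) ∧
      (m:ℝ) * rp L ((↑v : AddCircle L) - ↑p.2) < (k p:ℝ) + 1 := by
    intro p hp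
    obtain ⟨ht1, ht2⟩ := hτ p hp
    set δp : ℝ := min ((τ - w p)/(m:ℝ)) ((1 - (τ - w p))/(m:ℝ)) with hδp
    clear_value δp
    have hδpos : 0 < δp := by
      rw [hδp]
      refine lt_min ?_ ?_
      · exact div_pos (by linarith) hm'
      · exact div_pos (by linarith) hm' 
    have hμleδ : μ p ≤ δp := by
      simp only [hμ, hδp]; exact min_le_left _ _
    have hk0' : (0:ℝ) ≤ (k p:ℝ) := by exact_mod_cast (hkb p hp).1
    have hk1' : (k p : ℝ) ≤ (l:ℝ) - 1 := by
      have : ((k p : ℤ):ℝ) ≤ (((l:ℤ) - 1 : ℤ):ℝ) := by exact_mod_cast (hkb p hp).2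
      push_cast at this; linarith
    have hδ1 : (m:ℝ) * δp ≤ τ - w p := by
      have h : δp ≤ (τ - w p)/(m:ℝ) := by rw [hδp]; exact min_le_left _ _
      rw [le_div_iff₀ hm'] at h
      linarith
    have hδ2 : (m:ℝ) * δp ≤ 1 - (τ - w p) := by
      have h : δp ≤ (1 - (τ - w p))/(m:ℝ) := by rw [hδp]; exact min_le_right _ _
      rw [le_div_iff₀ hm'] at h
      linarith
    have hmrp : (m:ℝ) * rp L (t - ↑p.2) = (k p:ℝ) + (τ - w p) := by
      rw [hC p hp]; field_simp
    have hcl : |rp L ((↑v : AddCircle L) - ↑p.2) - rp L (t - ↑p.2)| < δp := by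
      apply rp_close
      · rw [dist_sub_right']
        calc dist (↑v : AddCircle L) t < εm/2 := hvt
          _ ≤ μ p / 2 := by linarith [hεmle p hp]
          _ < μ p := by linarith [hμpos p hp]
          _ ≤ δp := hμleδ
      · -- δp ≤ rp (t - p.2)
        have : (m:ℝ) * δp ≤ (m:ℝ) * rp L (t - ↑p.2) := by
          rw [hmrp]; linarith
        exact le_of_mul_le_mul_left this hm'
      · -- rp (t - p.2) + δp ≤ L
        have hL' : (m:ℝ) * L = l := hml
        have : (m:ℝ) * (rp L (t - ↑p.2) + δp) ≤ (m:ℝ) * L := by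
          rw [mul_add, hmrp, hL']
          linarith
        exact le_of_mul_le_mul_left this hm'
    have hdiff : (m:ℝ) * rp L ((↑v : AddCircle L) - ↑p.2) - (m:ℝ) * rp L (t - ↑p.2)
        = (m:ℝ) * (rp L ((↑v : AddCircle L) - ↑p.2) - rp L (t - ↑p.2)) := by ring
    have hmabs : (m:ℝ) * |rp L ((↑v : AddCircle L) - ↑p.2) - rp L (t - ↑p.2)| < (m:ℝ) * δp :=
      mul_lt_mul_of_pos_left hcl hm'
    have habs3 : |(m:ℝ) * (rp L ((↑v : AddCircle L) - ↑p.2) - rp L (t - ↑p.2))| < (m:ℝ) * δp := by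
      rw [abs_mul, abs_of_pos hm']
      exact hmabs
    have h4 := abs_lt.mp habs3
    constructor
    · linarith [h4.1, hδ1, hdiff, hmrp]
    · linarith [h4.2, hδ2, hdiff, hmrp]
  -- floor equalities for v
  have hQveq : ∀ p ∈ c, Qd L m (↑v : AddCircle L) (↑p.2 : AddCircle L) = k p := by
    intro p hp
    obtain ⟨h1, h2⟩ := hQv p hp
    have hQd : Qd L m (↑v : AddCircle L) (↑p.2 : AddCircle L)
        = ⌊(m:ℝ) * rp L ((↑v : AddCircle L) - ↑p.2)⌋ := rfl
    rw [hQd]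
    apply Int.floor_eq_iff.mpr
    exact ⟨le_of_lt h1, by push_cast; linarith⟩
  have hvne : ∀ p ∈ c, (↑v : AddCircle L) ≠ (↑p.2 : AddCircle L) := by
    intro p hp h
    obtain ⟨h1, h2⟩ := hQv p hp
    have hk0' : (0:ℝ) ≤ (k p:ℝ) := by exact_mod_cast (hkb p hp).1
    have : (↑v : AddCircle L) - ↑p.2 = 0 := by rw [h]; abel
    rw [this, rp_zero, mul_zero] at h1
    linarith
  -- reversed floors
  have hQrevS : ∀ p ∈ c, Qd L m (↑p.1 : AddCircle L) sc = (l:ℤ) - 1 - k p := by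
    intro p hp
    have h1 : (Qd L m sc (↑p.1 : AddCircle L) : ℝ) < QR L m sc ↑p.1 := by
      have hb := (hθb p hp).1
      have hθp : θ p = QR L m sc ↑p.1 - k p := by simp only [hθ]
      have hkp : (k p : ℝ) = (Qd L m sc (↑p.1 : AddCircle L) : ℝ) := by simp only [hk]
      rw [hθp, hkp] at hb
      linarith
    have := (Qd_rev hm hLdef h1).1
    have hkp : k p = Qd L m sc (↑p.1 : AddCircle L) := by simp only [hk]
    rw [this, hkp]
  have hQrevV : ∀ p ∈ c, Qd L m (↑p.2 : AddCircle L) (↑v : AddCircle L) = (l:ℤ) - 1 - k p := by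
    intro p hp
    have h1 : (Qd L m (↑v : AddCircle L) (↑p.2 : AddCircle L) : ℝ)
        < QR L m (↑v : AddCircle L) (↑p.2 : AddCircle L) := by
      rw [hQveq p hp]
      exact (hQv p hp).1
    have := (Qd_rev hm hLdef h1).1
    rw [this, hQveq p hp]
  -- adjacency characterization
  have hadjv : ∀ p ∈ c, (G₁.Adj s p.1 ↔ G₂.Adj v p.2) := by
    intro p hp
    constructor
    · intro h
      exact hvadj p.2 ((hAmem p.2).mpr ⟨p, hp, h, rfl⟩)
    · intro h2
      by_contra h1
      by_cases hnear : k p < m ∨ (l:ℤ) - m ≤ k p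
      · exact hvnadj p.2 ((hBmem p.2).mpr ⟨p, hp, ⟨h1, hnear⟩, rfl⟩) h2
      · push_neg at hnear
        have hfar' : (m:ℤ) ≤ k p ∧ k p ≤ (l:ℤ) - m - 1 := ⟨hnear.1, by omega⟩
        have hgt := (hclassT p hp).2.1 hfar'
        have hμle : μ p ≤ |dist t (↑p.2 : AddCircle L) - 1| := by
          simp only [hμ]; exact min_le_right _ _
        have habs : |dist t (↑p.2 : AddCircle L) - 1| = dist t (↑p.2 : AddCircle L) - 1 := by
          rw [abs_of_pos (by linarith)]
        rw [habs] at hμle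
        have htri : dist t (↑p.2 : AddCircle L) ≤ dist t (↑v : AddCircle L)
            + dist (↑v : AddCircle L) (↑p.2 : AddCircle L) := dist_triangle _ _ _
        have hvt' : dist t (↑v : AddCircle L) < εm/2 := by
          rw [dist_comm]; exact hvt
        have hut2 := hut₂ v p.2 h2
        have hεμ : εm ≤ μ p := hεmle p hp
        linarith
  -- assemble Good for the extended list
  refine ⟨v, ?_⟩
  intro a ha b hb
  rcases List.mem_cons.mp ha with ha' | ha' <;> rcases List.mem_cons.mp hb with hb' | hb'
  · subst ha'; subst hb'
    refine ⟨⟨fun _ => rfl, fun _ => rfl⟩, by simp, by rw [hQzero, hQzero]⟩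
  · -- a = (s,v), b ∈ c
    subst ha'
    refine ⟨?_, ?_, ?_⟩
    · constructor
      · intro h; exact absurd h.symm (hs b hb')
      · intro h; exact absurd (congrArg Subtype.val h) (hvne b hb')
    · exact hadjv b hb'
    · have h1 : Qd L m sc (↑b.1 : AddCircle L) = k b := by simp only [hk]
      have h2 := hQveq b hb'
      exact h1.trans h2.symm
  · -- a ∈ c, b = (s,v)
    subst hb'
    refine ⟨?_, ?_, ?_⟩
    · constructor
      · intro h; exact absurd h (hs a ha')
      · intro h; exact absurd (congrArg Subtype.val h).symm (hvne a ha')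
    · exact ((G₁.adj_comm a.1 s).trans ((hadjv a ha').trans (G₂.adj_comm v a.2)))
    · rw [hQrevS a ha', hQrevV a ha']
  · exact hGood a ha' b hb'

end Extension

section Assembly

variable {l m : ℕ} {S₁ S₂ : Set (AddCircle L)}
  {G₁ : SimpleGraph S₁} {G₂ : SimpleGraph S₂}

theorem main_iso
    (hm : 0 < m) (hl3 : 3 ≤ l) (hLdef : L = (l:ℝ)/(m:ℝ))
    (hS₁dense : Dense S₁) (hS₁count : S₁.Countable)
    (hS₂dense : Dense S₂) (hS₂count : S₂.Countable)
    (hidf₁ : IntegerDistanceFree m S₁) (hidf₂ : IntegerDistanceFree m S₂)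
    (hgec₁ : IsGEC G₁) (hut₁ : HasUnitThreshold G₁)
    (hgec₂ : IsGEC G₂) (hut₂ : HasUnitThreshold G₂) :
    Nonempty (G₁ ≃g G₂) := by
  classical
  have hS₁ne : S₁.Nonempty := hS₁dense.nonempty
  have hS₂ne : S₂.Nonempty := hS₂dense.nonempty
  obtain ⟨e₁, he₁⟩ := Set.Countable.exists_eq_range hS₁count hS₁ne
  obtain ⟨e₂, he₂⟩ := Set.Countable.exists_eq_range hS₂count hS₂ne
  let f₁ : ℕ → ↥S₁ := fun n => ⟨e₁ n, by rw [he₁]; exact Set.mem_range_self n⟩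
  let f₂ : ℕ → ↥S₂ := fun n => ⟨e₂ n, by rw [he₂]; exact Set.mem_range_self n⟩
  have hf₁surj : ∀ a : ↥S₁, ∃ n, f₁ n = a := by
    intro a
    have ha : (a : AddCircle L) ∈ Set.range e₁ := by rw [← he₁]; exact a.2
    obtain ⟨n, hn⟩ := ha
    exact ⟨n, Subtype.ext hn⟩
  have hf₂surj : ∀ b : ↥S₂, ∃ n, f₂ n = b := by
    intro b
    have hb : (b : AddCircle L) ∈ Set.range e₂ := by rw [← he₂]; exact b.2
    obtain ⟨n, hn⟩ := hb
    exact ⟨n, Subtype.ext hn⟩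
  have step1 : ∀ (c : List (↥S₁ × ↥S₂)), Good m G₁ G₂ c → ∀ s : ↥S₁,
      ∃ v : ↥S₂, Good m G₁ G₂ ((s, v) :: c) :=
    fun c hc s => extend_good hm hl3 hLdef hS₂dense hidf₁ hidf₂ hut₁ hut₂ hgec₂ c hc s
  have step2 : ∀ (c : List (↥S₁ × ↥S₂)), Good m G₁ G₂ c → ∀ b : ↥S₂,
      ∃ u : ↥S₁, Good m G₁ G₂ ((u, b) :: c) := by
    intro c hc b
    obtain ⟨u, hu⟩ := extend_good hm hl3 hLdef hS₁dense hidf₂ hidf₁ hut₂ hut₁ hgec₁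
      (c.map Prod.swap) (good_swap hc) b
    refine ⟨u, ?_⟩
    have h2 := good_swap hu
    have hmm : (((b, u) :: c.map Prod.swap).map Prod.swap) = (u, b) :: c := by
      simp [List.map_map, Function.comp_def, Prod.swap_swap]
    rwa [hmm] at h2
  choose F1 hF1 using step1
  choose F2 hF2 using step2
  have hGoodNil : Good m G₁ G₂ ([] : List (↥S₁ × ↥S₂)) := by
    intro p hp
    exact absurd hp List.not_mem_nil
  let step : ℕ → {cg : List (↥S₁ × ↥S₂) // Good m G₁ G₂ cg} →
      {cg : List (↥S₁ × ↥S₂) // Good m G₁ G₂ cg} := fun n cg =>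
    ⟨(F2 ((f₁ n, F1 cg.1 cg.2 (f₁ n)) :: cg.1) (hF1 cg.1 cg.2 (f₁ n)) (f₂ n), f₂ n) ::
        (f₁ n, F1 cg.1 cg.2 (f₁ n)) :: cg.1,
      hF2 ((f₁ n, F1 cg.1 cg.2 (f₁ n)) :: cg.1) (hF1 cg.1 cg.2 (f₁ n)) (f₂ n)⟩
  let chain : ℕ → {cg : List (↥S₁ × ↥S₂) // Good m G₁ G₂ cg} := fun n =>
    Nat.rec ⟨[], hGoodNil⟩ (fun n ih => step n ih) n
  have chain_succ : ∀ n, chain (n+1) = step n (chain n) := fun _ => rfl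
  have hsub : ∀ n, ∀ x ∈ (chain n).1, x ∈ (chain (n+1)).1 := by
    intro n x hx
    rw [chain_succ]
    exact List.mem_cons_of_mem _ (List.mem_cons_of_mem _ hx)
  have hmono : ∀ {a b : ℕ}, a ≤ b → ∀ x ∈ (chain a).1, x ∈ (chain b).1 := by
    intro a b hab
    induction hab with
    | refl => exact fun x hx => hx
    | step _ ih => exact fun x hx => hsub _ x (ih x hx)
  have hdom : ∀ n, ∃ v, (f₁ n, v) ∈ (chain (n+1)).1 := by
    intro n
    rw [chain_succ]
    exact ⟨F1 (chain n).1 (chain n).2 (f₁ n),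
      List.mem_cons_of_mem _ List.mem_cons_self⟩
  have hran : ∀ n, ∃ u, (u, f₂ n) ∈ (chain (n+1)).1 := by
    intro n
    rw [chain_succ]
    exact ⟨_, List.mem_cons_self⟩
  have hcompat : ∀ a b a' b', (∃ n, (a, b) ∈ (chain n).1) → (∃ n, (a', b') ∈ (chain n).1) →
      ((a = a' ↔ b = b') ∧ (G₁.Adj a a' ↔ G₂.Adj b b')) := by
    rintro a b a' b' ⟨n, hn⟩ ⟨n', hn'⟩
    have h1 := hmono (le_max_left n n') _ hn
    have h2 := hmono (le_max_right n n') _ hn'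
    have h := (chain (max n n')).2 (a, b) h1 (a', b') h2
    exact ⟨h.1, h.2.1⟩
  have htotal : ∀ a : ↥S₁, ∃ b, ∃ n, (a, b) ∈ (chain n).1 := by
    intro a
    obtain ⟨n, hn⟩ := hf₁surj a
    obtain ⟨v, hv⟩ := hdom n
    rw [hn] at hv
    exact ⟨v, n+1, hv⟩
  have hcototal : ∀ b : ↥S₂, ∃ a, ∃ n, (a, b) ∈ (chain n).1 := by
    intro b
    obtain ⟨n, hn⟩ := hf₂surj b
    obtain ⟨u, hu⟩ := hran n
    rw [hn] at hu
    exact ⟨u, n+1, hu⟩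
  choose φ hφ using htotal
  choose ψ hψ using hcototal
  have hli : ∀ a, ψ (φ a) = a := by
    intro a
    exact ((hcompat (ψ (φ a)) (φ a) a (φ a) (hψ (φ a)) (hφ a)).1.mpr rfl)
  have hri : ∀ b, φ (ψ b) = b := by
    intro b
    exact ((hcompat (ψ b) (φ (ψ b)) (ψ b) b (hφ (ψ b)) (hψ b)).1.mp rfl)
  exact ⟨⟨⟨φ, ψ, hli, hri⟩,
    fun {a b} => ((hcompat a (φ a) b (φ b) (hφ a) (hφ b)).2).symm⟩⟩

end Assembly

end Stmt13

/-- For rational `L = ℓ/m > 2` in lowest terms and dense countable integer-distance-free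
`S, S' ⊆ ℝ/Lℤ`, any two g.e.c. unit-threshold graphs on `S` and `S'` are isomorphic. -/
theorem stmt_13 (l m : ℕ) (hl : 0 < l) (hm : 0 < m) (hco : Nat.Coprime l m)
    (L : ℝ) (hLdef : L = (l : ℝ) / (m : ℝ)) (hL : 2 < L)
    (S S' : Set (AddCircle L)) (hSdense : Dense S) (hScount : S.Countable)
    (hS'dense : Dense S') (hS'count : S'.Countable)
    (hSidf : IntegerDistanceFree m S) (hS'idf : IntegerDistanceFree m S')
    (G : SimpleGraph S) (hgec : IsGEC G) (hut : HasUnitThreshold G)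
    (G' : SimpleGraph S') (hgec' : IsGEC G') (hut' : HasUnitThreshold G') :
    Nonempty (G ≃g G') := by
  haveI : Fact (0 < L) := ⟨by linarith⟩
  have hm' : (0:ℝ) < m := by exact_mod_cast hm
  have hl3 : 3 ≤ l := by
    have h2m : (2:ℝ) * m < l := by
      rw [hLdef, lt_div_iff₀ hm'] at hL
      linarith
    have hn : 2 * m < l := by exact_mod_cast h2m
    omega
  exact Stmt13.main_iso hm hl3 hLdef hSdense hScount hS'dense hS'count hSidf hS'idf
    hgec hut hgec' hut'
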